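/- arXiv:1407.5288 — 2 statements merged into one kernel-verified Lean document; each statement's English description precedes it below -/
import Mathlib

section
/- Every switching class on an odd number of vertices contains a unique graph in which every vertex has even degree. -/
/-- Seidel switching of a simple graph `Γ` with respect to a set `X` of vertices:
adjacency between `X` and its complement is complemented, adjacency within `X`
or within the complement is unchanged. -/
def switching {Ω : Type*} (X : Set Ω) (Γ : SimpleGraph Ω) : SimpleGraph Ω where
  Adj u v := ((u ∈ X ↔ v ∈ X) ∧ Γ.Adj u v) ∨ (¬(u ∈ X ↔ v ∈ X) ∧ ¬Γ.Adj u v)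
  symm := by
    constructor
    intro u v h
    rcases h with ⟨h1, h2⟩ | ⟨h1, h2⟩
    · exact Or.inl ⟨h1.symm, h2.symm⟩
    · exact Or.inr ⟨fun h => h1 h.symm, fun h => h2 h.symm⟩
  loopless := by
    constructor
    intro u h
    rcases h with ⟨_, h⟩ | ⟨h, _⟩
    · exact Γ.loopless.irrefl u h
    · exact h Iff.rfl

lemma switching_adj {Ω : Type*} (X : Set Ω) (Γ : SimpleGraph Ω) (u v : Ω) :
    (switching X Γ).Adj u v ↔ ((u ∈ X ↔ v ∈ X) ↔ Γ.Adj u v) := by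
  show ((u ∈ X ↔ v ∈ X) ∧ Γ.Adj u v) ∨ (¬(u ∈ X ↔ v ∈ X) ∧ ¬Γ.Adj u v) ↔ _
  tauto

lemma switching_trivial {Ω : Type*} (Z : Set Ω) (Γ : SimpleGraph Ω)
    (h : ∀ u v : Ω, u ∈ Z ↔ v ∈ Z) : switching Z Γ = Γ := by
  ext u v
  rw [switching_adj]
  have := h u v
  tauto

lemma switching_switching {Ω : Type*} (X Y : Set Ω) (Γ : SimpleGraph Ω) :
    switching {w | ¬(w ∈ Y ↔ w ∈ X)} (switching X Γ) = switching Y Γ := by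
  ext u v
  simp only [switching_adj, Set.mem_setOf_eq]
  tauto

/-- Parity of degrees under switching. -/
lemma switching_parity {Ω : Type*} [Fintype Ω] (X : Set Ω) (Γ : SimpleGraph Ω) (v : Ω) :
    (v ∈ X → ({u | (switching X Γ).Adj v u}.ncard + {u | Γ.Adj v u}.ncard) % 2
        = Xᶜ.ncard % 2) ∧
    (v ∉ X → ({u | (switching X Γ).Adj v u}.ncard + {u | Γ.Adj v u}.ncard) % 2
        = X.ncard % 2) := by
  classical
  set N : Set Ω := {u | Γ.Adj v u} with hN
  constructor
  · intro h
    have hset : {u | (switching X Γ).Adj v u} = (X ∩ N) ∪ (Xᶜ ∩ Nᶜ) := by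
      ext u
      simp only [Set.mem_setOf_eq, switching_adj, Set.mem_union, Set.mem_inter_iff,
        Set.mem_compl_iff, hN, Set.mem_setOf_eq]
      tauto
    have h1 : ((X ∩ N) ∪ (Xᶜ ∩ Nᶜ)).ncard = (X ∩ N).ncard + (Xᶜ ∩ Nᶜ).ncard :=
      Set.ncard_union_eq (by
        rw [Set.disjoint_left]; rintro a ⟨ha, _⟩ ⟨ha', _⟩; exact ha' ha) (Set.toFinite _) (Set.toFinite _)
    have h2 : N.ncard = (X ∩ N).ncard + (Xᶜ ∩ N).ncard := by
      have hd : Disjoint (X ∩ N) (Xᶜ ∩ N) := by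
        rw [Set.disjoint_left]; rintro a ⟨ha, _⟩ ⟨ha', _⟩; exact ha' ha
      have he : N = (X ∩ N) ∪ (Xᶜ ∩ N) := by
        ext u; simp only [Set.mem_union, Set.mem_inter_iff, Set.mem_compl_iff]; tauto
      calc N.ncard = ((X ∩ N) ∪ (Xᶜ ∩ N)).ncard := by rw [← he]
        _ = (X ∩ N).ncard + (Xᶜ ∩ N).ncard := Set.ncard_union_eq hd (Set.toFinite _) (Set.toFinite _)
    have h3 : Xᶜ.ncard = (Xᶜ ∩ N).ncard + (Xᶜ ∩ Nᶜ).ncard := by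
      have hd : Disjoint (Xᶜ ∩ N) (Xᶜ ∩ Nᶜ) := by
        rw [Set.disjoint_left]; rintro a ⟨_, ha⟩ ⟨_, ha'⟩; exact ha' ha
      have he : Xᶜ = (Xᶜ ∩ N) ∪ (Xᶜ ∩ Nᶜ) := by
        ext u; simp only [Set.mem_union, Set.mem_inter_iff, Set.mem_compl_iff]; tauto
      calc Xᶜ.ncard = ((Xᶜ ∩ N) ∪ (Xᶜ ∩ Nᶜ)).ncard := by rw [← he]
        _ = (Xᶜ ∩ N).ncard + (Xᶜ ∩ Nᶜ).ncard := Set.ncard_union_eq hd (Set.toFinite _) (Set.toFinite _)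
    rw [hset, h1]
    omega
  · intro h
    have hset : {u | (switching X Γ).Adj v u} = (Xᶜ ∩ N) ∪ (X ∩ Nᶜ) := by
      ext u
      simp only [Set.mem_setOf_eq, switching_adj, Set.mem_union, Set.mem_inter_iff,
        Set.mem_compl_iff, hN, Set.mem_setOf_eq]
      tauto
    have h1 : ((Xᶜ ∩ N) ∪ (X ∩ Nᶜ)).ncard = (Xᶜ ∩ N).ncard + (X ∩ Nᶜ).ncard :=
      Set.ncard_union_eq (by
        rw [Set.disjoint_left]; rintro a ⟨ha, _⟩ ⟨ha', _⟩; exact ha ha') (Set.toFinite _) (Set.toFinite _)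
    have h2 : N.ncard = (X ∩ N).ncard + (Xᶜ ∩ N).ncard := by
      have hd : Disjoint (X ∩ N) (Xᶜ ∩ N) := by
        rw [Set.disjoint_left]; rintro a ⟨ha, _⟩ ⟨ha', _⟩; exact ha' ha
      have he : N = (X ∩ N) ∪ (Xᶜ ∩ N) := by
        ext u; simp only [Set.mem_union, Set.mem_inter_iff, Set.mem_compl_iff]; tauto
      calc N.ncard = ((X ∩ N) ∪ (Xᶜ ∩ N)).ncard := by rw [← he]
        _ = (X ∩ N).ncard + (Xᶜ ∩ N).ncard := Set.ncard_union_eq hd (Set.toFinite _) (Set.toFinite _)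
    have h3 : X.ncard = (X ∩ N).ncard + (X ∩ Nᶜ).ncard := by
      have hd : Disjoint (X ∩ N) (X ∩ Nᶜ) := by
        rw [Set.disjoint_left]; rintro a ⟨_, ha⟩ ⟨_, ha'⟩; exact ha' ha
      have he : X = (X ∩ N) ∪ (X ∩ Nᶜ) := by
        ext u; simp only [Set.mem_union, Set.mem_inter_iff, Set.mem_compl_iff]; tauto
      calc X.ncard = ((X ∩ N) ∪ (X ∩ Nᶜ)).ncard := by rw [← he]
        _ = (X ∩ N).ncard + (X ∩ Nᶜ).ncard := Set.ncard_union_eq hd (Set.toFinite _) (Set.toFinite _)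
    rw [hset, h1]
    omega

theorem stmt12 {Ω : Type*} [Fintype Ω] (hodd : Odd (Fintype.card Ω))
    (Γ : SimpleGraph Ω) :
    ∃! Γ' : SimpleGraph Ω, (∃ X : Set Ω, switching X Γ = Γ') ∧
      ∀ v : Ω, Even {u : Ω | Γ'.Adj v u}.ncard := by
  classical
  -- the set of odd-degree vertices
  set X₀ : Set Ω := {v | Odd {u | Γ.Adj v u}.ncard} with hX₀
  -- handshake: X₀ has even cardinality
  have hdeg : ∀ v : Ω, Γ.degree v = {u | Γ.Adj v u}.ncard := by
    intro v
    rw [Set.ncard_eq_toFinset_card']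
    rfl
  have hhs : Even X₀.ncard := by
    have h := Γ.even_card_odd_degree_vertices
    have : X₀.ncard = (Finset.univ.filter (fun v : Ω => Odd (Γ.degree v))).card := by
      rw [Set.ncard_eq_toFinset_card']
      congr 1
      ext v
      simp [hX₀, hdeg v]
    rwa [this]
  have htot : X₀.ncard + X₀ᶜ.ncard = Fintype.card Ω := by
    rw [Set.ncard_add_ncard_compl, Nat.card_eq_fintype_card]
  have hXc : Odd X₀ᶜ.ncard := by
    rcases hhs with ⟨k, hk⟩; rcases hodd with ⟨m, hm⟩
    exact ⟨m - k, by omega⟩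
  -- existence
  refine ⟨switching X₀ Γ, ⟨⟨X₀, rfl⟩, ?_⟩, ?_⟩
  · intro v
    by_cases hv : v ∈ X₀
    · have hp := (switching_parity X₀ Γ v).1 hv
      have hodd' : Odd {u | Γ.Adj v u}.ncard := hv
      rw [Nat.even_iff]
      rw [Nat.odd_iff] at hodd' hXc
      omega
    · have hp := (switching_parity X₀ Γ v).2 hv
      have heven' : Even {u | Γ.Adj v u}.ncard := by
        rw [Nat.even_iff]; have := hv; rw [hX₀, Set.mem_setOf_eq, Nat.odd_iff] at this; omega
      rw [Nat.even_iff]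
      rw [Nat.even_iff] at heven' hhs
      omega
  -- uniqueness
  · rintro Γ' ⟨⟨Y, rfl⟩, hY⟩
    -- Z measures the difference between Y and X₀
    set Z : Set Ω := {w | ¬(w ∈ Y ↔ w ∈ X₀)} with hZ
    have hswitch : switching Z (switching X₀ Γ) = switching Y Γ := by
      rw [hZ]; exact switching_switching X₀ Y Γ
    -- both Γ₁ := switching X₀ Γ and switching Z Γ₁ have all degrees even
    have hΓ₁even : ∀ v : Ω, Even {u | (switching X₀ Γ).Adj v u}.ncard := by
      intro v
      by_cases hv : v ∈ X₀
      · have hp := (switching_parity X₀ Γ v).1 hv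
        have hodd' : Odd {u | Γ.Adj v u}.ncard := hv
        rw [Nat.even_iff]; rw [Nat.odd_iff] at hodd' hXc; omega
      · have hp := (switching_parity X₀ Γ v).2 hv
        have heven' : Even {u | Γ.Adj v u}.ncard := by
          rw [Nat.even_iff]; have := hv; rw [hX₀, Set.mem_setOf_eq, Nat.odd_iff] at this; omega
        rw [Nat.even_iff]; rw [Nat.even_iff] at heven' hhs; omega
    have hZtot : Z.ncard + Zᶜ.ncard = Fintype.card Ω := by
      rw [Set.ncard_add_ncard_compl, Nat.card_eq_fintype_card]
    -- for each v, the relevant side of Z has even cardinality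
    have hkey : ∀ v : Ω, (v ∈ Z → Zᶜ.ncard % 2 = 0) ∧ (v ∉ Z → Z.ncard % 2 = 0) := by
      intro v
      have h1 : Even {u | (switching Z (switching X₀ Γ)).Adj v u}.ncard := by
        rw [hswitch]; exact hY v
      have h2 := hΓ₁even v
      rw [Nat.even_iff] at h1 h2
      constructor
      · intro hv
        have hp := (switching_parity Z (switching X₀ Γ) v).1 hv
        omega
      · intro hv
        have hp := (switching_parity Z (switching X₀ Γ) v).2 hv
        omega
    -- Z is empty or everything
    have hZconst : ∀ u v : Ω, u ∈ Z ↔ v ∈ Z := by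
      rcases hodd with ⟨m, hm⟩
      intro u v
      by_cases hu : u ∈ Z <;> by_cases hv : v ∈ Z
      · exact iff_of_true hu hv
      · exfalso
        have h1 := (hkey u).1 hu; have h2 := (hkey v).2 hv
        omega
      · exfalso
        have h1 := (hkey u).2 hu; have h2 := (hkey v).1 hv
        omega
      · exact iff_of_false hu hv
    calc switching Y Γ = switching Z (switching X₀ Γ) := hswitch.symm
      _ = switching X₀ Γ := switching_trivial Z _ hZconst
end

section
/- If a switching class on an odd number of vertices contains the graphs Γ (with all degrees even) and σ_X(Γ), then {X, Ω \ X} is exactly the partition of vertices of σ_X(Γ) into those of even and odd degree; in particular the all-even-degree graph in the class is unique and its automorphism group equals the automorphism group of the switching class. -/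
lemma parity13 {Ω : Type*} [Fintype Ω] (hodd : Odd (Fintype.card Ω))
    (Γ : SimpleGraph Ω) (hΓ : ∀ v : Ω, Even {u : Ω | Γ.Adj v u}.ncard)
    (X : Set Ω) (v : Ω) :
    Odd {u : Ω | (switching X Γ).Adj v u}.ncard ↔ (v ∈ X ↔ Even X.ncard) := by
  classical
  set A : Set Ω := {u | (v ∈ X ↔ u ∈ X) ∧ Γ.Adj v u} with hA
  set B : Set Ω := {u | ¬(v ∈ X ↔ u ∈ X) ∧ ¬Γ.Adj v u} with hB
  set C : Set Ω := {u | ¬(v ∈ X ↔ u ∈ X) ∧ Γ.Adj v u} with hC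
  set S : Set Ω := {u | ¬(v ∈ X ↔ u ∈ X)} with hS
  have hN' : {u : Ω | (switching X Γ).Adj v u} = A ∪ B := by
    ext u; simp only [switching, Set.mem_setOf_eq, Set.mem_union, hA, hB]; try tauto
  have hN : {u : Ω | Γ.Adj v u} = A ∪ C := by
    ext u; simp only [Set.mem_setOf_eq, Set.mem_union, hA, hC]; tauto
  have hSu : S = B ∪ C := by
    ext u; simp only [Set.mem_setOf_eq, Set.mem_union, hB, hC]; tauto
  have dAB : Disjoint A B := by
    rw [Set.disjoint_left]; intro a ha hb; exact hb.1 ha.1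
  have dAC : Disjoint A C := by
    rw [Set.disjoint_left]; intro a ha hb; exact hb.1 ha.1
  have dBC : Disjoint B C := by
    rw [Set.disjoint_left]; intro a ha hb; exact ha.2 hb.2
  have hsum : {u : Ω | (switching X Γ).Adj v u}.ncard + {u : Ω | Γ.Adj v u}.ncard
      = 2 * A.ncard + S.ncard := by
    rw [hN', hN, hSu, Set.ncard_union_eq dAB (Set.toFinite _) (Set.toFinite _),
      Set.ncard_union_eq dAC (Set.toFinite _) (Set.toFinite _),
      Set.ncard_union_eq dBC (Set.toFinite _) (Set.toFinite _)]
    ring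
  have hev := hΓ v
  have key : Odd {u : Ω | (switching X Γ).Adj v u}.ncard ↔ Odd S.ncard := by
    rw [Nat.even_iff] at hev
    rw [Nat.odd_iff, Nat.odd_iff]
    omega
  rw [key]
  by_cases hv : v ∈ X
  · have : S = Xᶜ := by
      ext u; simp only [hS, Set.mem_setOf_eq, Set.mem_compl_iff]; tauto
    rw [this]
    have hc : X.ncard + Xᶜ.ncard = Fintype.card Ω := by
      rw [← Nat.card_eq_fintype_card]; exact Set.ncard_add_ncard_compl X
    rw [Nat.odd_iff] at hodd ⊢
    rw [Nat.even_iff]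
    constructor
    · intro h; simp only [hv, true_iff]; omega
    · intro h; have := h.mp hv; omega
  · have : S = X := by
      ext u; simp only [hS, Set.mem_setOf_eq]; tauto
    rw [this]
    rw [Nat.odd_iff, Nat.even_iff]
    constructor
    · intro h
      constructor
      · intro hx; exact absurd hx hv
      · intro h2; omega
    · intro h
      by_contra hne
      have : X.ncard % 2 = 0 := by omega
      exact hv (h.mpr this)

lemma switching_const {Ω : Type*} (X : Set Ω) (Γ : SimpleGraph Ω)
    (h : ∀ u v : Ω, u ∈ X ↔ v ∈ X) : switching X Γ = Γ := by
  ext u v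
  simp only [switching]
  have := h u v
  tauto

lemma all_even_eq {Ω : Type*} [Fintype Ω] (hodd : Odd (Fintype.card Ω))
    (Γ : SimpleGraph Ω) (hΓ : ∀ v : Ω, Even {u : Ω | Γ.Adj v u}.ncard)
    (X : Set Ω) (h : ∀ v : Ω, Even {u : Ω | (switching X Γ).Adj v u}.ncard) :
    switching X Γ = Γ := by
  have hno : ∀ v : Ω, ¬(v ∈ X ↔ Even X.ncard) := by
    intro v hv
    have := (parity13 hodd Γ hΓ X v).mpr hv
    exact (Nat.not_odd_iff_even.mpr (h v)) this
  apply switching_const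
  intro u v
  by_cases he : Even X.ncard
  · have h1 := hno u; have h2 := hno v; tauto
  · have h1 := hno u; have h2 := hno v; tauto

theorem stmt13 {Ω : Type*} [Fintype Ω] (hodd : Odd (Fintype.card Ω))
    (Γ : SimpleGraph Ω) (hΓ : ∀ v : Ω, Even {u : Ω | Γ.Adj v u}.ncard)
    (X : Set Ω) :
    (X = {v : Ω | Odd {u : Ω | (switching X Γ).Adj v u}.ncard} ∨
      X = {v : Ω | Even {u : Ω | (switching X Γ).Adj v u}.ncard}) ∧
    ((∀ v : Ω, Even {u : Ω | (switching X Γ).Adj v u}.ncard) → switching X Γ = Γ) ∧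
    ({g : Equiv.Perm Ω | ∀ u v, Γ.Adj (g u) (g v) ↔ Γ.Adj u v} =
      {g : Equiv.Perm Ω | ∃ Y : Set Ω,
        ∀ u v, (switching Y Γ).Adj (g u) (g v) ↔ Γ.Adj u v}) := by
  refine ⟨?_, all_even_eq hodd Γ hΓ X, ?_⟩
  · by_cases he : Even X.ncard
    · left
      ext v
      rw [Set.mem_setOf_eq, parity13 hodd Γ hΓ X v]
      simp [he]
    · right
      ext v
      rw [Set.mem_setOf_eq, ← Nat.not_odd_iff_even, parity13 hodd Γ hΓ X v]
      tauto
  · ext g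
    simp only [Set.mem_setOf_eq]
    constructor
    · intro hg
      refine ⟨∅, ?_⟩
      have : switching (∅ : Set Ω) Γ = Γ := switching_const _ _ (by simp)
      rw [this]
      exact hg
    · rintro ⟨Y, hY⟩
      have heq : switching Y Γ = Γ := by
        apply all_even_eq hodd Γ hΓ Y
        intro w
        have hset : {u : Ω | (switching Y Γ).Adj w u}
            = g '' {u : Ω | Γ.Adj (g.symm w) u} := by
          ext u
          simp only [Set.mem_setOf_eq, Set.mem_image]
          constructor
          · intro h
            refine ⟨g.symm u, ?_, g.apply_symm_apply u⟩
            have := hY (g.symm w) (g.symm u)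
            rw [g.apply_symm_apply, g.apply_symm_apply] at this
            exact this.mp h
          · rintro ⟨u', hu', rfl⟩
            have := hY (g.symm w) u'
            rw [g.apply_symm_apply] at this
            exact this.mpr hu'
        rw [hset, Set.ncard_image_of_injective _ g.injective]
        exact hΓ (g.symm w)
      rw [heq] at hY
      exact hY
end
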